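/- For any permutation a of the letters x_2,...,x_{n-1}, the left-nested comb Γ_{1a} = [...[[x_1, x_{a(1)}], x_{a(2)}],..., x_{a(n-2)}] expands in the word basis as Γ_{1a} = Σ_{a ∈ ū⧢v} (-1)^{|u|} u 1 v, where the sum is over all ways of writing a as a shuffle of the reversal ū of a word u with a word v. -/

import Mathlib

open scoped BigOperators

/-- `Wd m` : the algebra of formal ℚ-linear combinations of words in letters `x_1,…,x_m`
(represented as `Fin m`), with concatenation product. -/
abbrev Wd (m : ℕ) := MonoidAlgebra ℚ (FreeMonoid (Fin m))

/-- The word monomial associated to a list of letters. -/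
noncomputable def word {m : ℕ} (l : List (Fin m)) : Wd m :=
  MonoidAlgebra.single (FreeMonoid.ofList l) 1

/-- All interleavings (shuffles) of two lists. -/
def shuffles {α : Type*} : List α → List α → List (List α)
  | [], bs => [bs]
  | a :: as, [] => [a :: as]
  | a :: as, b :: bs =>
      (shuffles as (b :: bs)).map (a :: ·) ++ (shuffles (a :: as) bs).map (b :: ·)

/-- The shuffle product of two words, as an element of `Wd m`. -/
noncomputable def shuffleProd {m : ℕ} (a b : List (Fin m)) : Wd m :=
  ((shuffles a b).map word).sum

/-- Binary trees representing iterated commutators (Lie monomials). -/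
inductive LieTree (m : ℕ) where
  | leaf : Fin m → LieTree m
  | node : LieTree m → LieTree m → LieTree m

/-- Expansion of a Lie monomial in the word algebra, via `[u,v] = uv - vu`. -/
noncomputable def LieTree.expand {m : ℕ} : LieTree m → Wd m
  | .leaf i => word [i]
  | .node u v => u.expand * v.expand - v.expand * u.expand

/-- The list of leaf labels of a Lie tree, read left to right. -/
def LieTree.leaves {m : ℕ} : LieTree m → List (Fin m)
  | .leaf i => [i]
  | .node u v => u.leaves ++ v.leaves

/-- `Lie(m)` : the span of the multilinear Lie monomials (each letter used exactly once). -/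
noncomputable def LieSub (m : ℕ) : Submodule ℚ (Wd m) :=
  Submodule.span ℚ
    {x | ∃ T : LieTree m, T.leaves.Perm (List.finRange m) ∧ x = LieTree.expand T}

/-- `W(m)` : the span of the multilinear words (each letter used exactly once). -/
noncomputable def Wsub (m : ℕ) : Submodule ℚ (Wd m) :=
  Submodule.span ℚ {x | ∃ l : List (Fin m), l.Perm (List.finRange m) ∧ x = word l}

/-- `Sh(m)` : the span of nontrivial shuffles of multilinear words. -/
noncomputable def ShSub (m : ℕ) : Submodule ℚ (Wd m) :=
  Submodule.span ℚ
    {x | ∃ a b : List (Fin m), a ≠ [] ∧ b ≠ [] ∧ (a ++ b).Perm (List.finRange m) ∧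
      x = shuffleProd a b}

/-- The left-nested comb `Γ_{1a} = [...[[x_1, a_1], a_2], …]` (the letter `x_1` is `0`). -/
def comb {m : ℕ} [NeZero m] (a : List (Fin m)) : LieTree m :=
  a.foldl (fun t i => LieTree.node t (LieTree.leaf i)) (LieTree.leaf 0)

/-- The finset of permutations of the letters `x_2,…,x_m` (i.e. of `(finRange m).tail`). -/
noncomputable def permsTail (m : ℕ) : Finset (List (Fin m)) :=
  ((List.finRange m).tail).permutations.toFinset

/-! ### Auxiliary lemmas on `shuffles` -/

theorem shuffles_nil_right {α : Type*} (p : List α) : shuffles p [] = [p] := by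
  cases p <;> simp [shuffles]

theorem shuffles_nil_left {α : Type*} (v : List α) : shuffles [] v = [v] := by
  simp [shuffles]

theorem perm_of_mem_shuffles {α : Type*} : ∀ (p v w : List α), w ∈ shuffles p v → w.Perm (p ++ v)
  | [], bs, w, h => by
    rw [shuffles_nil_left, List.mem_singleton] at h
    simp [h]
  | a :: as, [], w, h => by
    rw [shuffles_nil_right, List.mem_singleton] at h
    simp [h]
  | a :: as, b :: bs, w, h => by
    simp only [shuffles, List.mem_append, List.mem_map] at h
    rcases h with ⟨t, ht, rfl⟩ | ⟨t, ht, rfl⟩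
    · exact (perm_of_mem_shuffles _ _ _ ht).cons a
    · exact ((perm_of_mem_shuffles _ _ _ ht).cons b).trans List.perm_middle.symm
  termination_by p v => p.length + v.length

theorem cons_left_mem_shuffles {α : Type*} {p v w : List α} (x : α) (h : w ∈ shuffles p v) :
    x :: w ∈ shuffles (x :: p) v := by
  cases v with
  | nil => rw [shuffles_nil_right, List.mem_singleton] at h ⊢; rw [h]
  | cons b bs =>
    simp only [shuffles, List.mem_append, List.mem_map]
    exact Or.inl ⟨w, h, rfl⟩

theorem cons_right_mem_shuffles {α : Type*} {p v w : List α} (x : α) (h : w ∈ shuffles p v) :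
    x :: w ∈ shuffles p (x :: v) := by
  cases p with
  | nil => rw [shuffles_nil_left, List.mem_singleton] at h; rw [shuffles_nil_left, h, List.mem_singleton]
  | cons a as =>
    simp only [shuffles, List.mem_append, List.mem_map]
    exact Or.inr ⟨w, h, rfl⟩

theorem concat_mem_shuffles_single {α : Type*} : ∀ (bs : List α) (x : α), bs ++ [x] ∈ shuffles [x] bs
  | [], x => by simp [shuffles]
  | b :: bs, x => by
    show b :: (bs ++ [x]) ∈ _
    exact cons_right_mem_shuffles b (concat_mem_shuffles_single bs x)

theorem concat_mem_shuffles_single' {α : Type*} : ∀ (bs : List α) (x : α), bs ++ [x] ∈ shuffles bs [x]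
  | [], x => by simp [shuffles]
  | b :: bs, x => by
    show b :: (bs ++ [x]) ∈ _
    exact cons_left_mem_shuffles b (concat_mem_shuffles_single' bs x)

theorem snoc_left_mem_shuffles {α : Type*} : ∀ (p v w : List α) (x : α), w ∈ shuffles p v →
    w ++ [x] ∈ shuffles (p ++ [x]) v
  | [], bs, w, x, h => by
    rw [shuffles_nil_left, List.mem_singleton] at h
    rw [h]
    exact concat_mem_shuffles_single bs x
  | a :: as, [], w, x, h => by
    rw [shuffles_nil_right, List.mem_singleton] at h
    subst h
    rw [shuffles_nil_right]
    exact List.mem_singleton.2 rfl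
  | a :: as, b :: bs, w, x, h => by
    simp only [shuffles, List.mem_append, List.mem_map] at h
    rcases h with ⟨t, ht, rfl⟩ | ⟨t, ht, rfl⟩
    · exact cons_left_mem_shuffles a (snoc_left_mem_shuffles as (b :: bs) t x ht)
    · exact cons_right_mem_shuffles b (snoc_left_mem_shuffles (a :: as) bs t x ht)
  termination_by p v => p.length + v.length

theorem snoc_right_mem_shuffles {α : Type*} : ∀ (p v w : List α) (x : α), w ∈ shuffles p v →
    w ++ [x] ∈ shuffles p (v ++ [x])
  | [], bs, w, x, h => by
    rw [shuffles_nil_left, List.mem_singleton] at h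
    subst h
    rw [shuffles_nil_left]
    exact List.mem_singleton.2 rfl
  | a :: as, [], w, x, h => by
    rw [shuffles_nil_right, List.mem_singleton] at h
    subst h
    exact concat_mem_shuffles_single' (a :: as) x
  | a :: as, b :: bs, w, x, h => by
    simp only [shuffles, List.mem_append, List.mem_map] at h
    rcases h with ⟨t, ht, rfl⟩ | ⟨t, ht, rfl⟩
    · exact cons_left_mem_shuffles a (snoc_right_mem_shuffles as (b :: bs) t x ht)
    · exact cons_right_mem_shuffles b (snoc_right_mem_shuffles (a :: as) bs t x ht)
  termination_by p v => p.length + v.length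

theorem reverse_mem_shuffles {α : Type*} : ∀ (p v w : List α), w ∈ shuffles p v →
    w.reverse ∈ shuffles p.reverse v.reverse
  | [], bs, w, h => by
    rw [shuffles_nil_left, List.mem_singleton] at h
    subst h
    rw [List.reverse_nil, shuffles_nil_left]
    exact List.mem_singleton.2 rfl
  | a :: as, [], w, h => by
    rw [shuffles_nil_right, List.mem_singleton] at h
    subst h
    rw [List.reverse_nil, shuffles_nil_right]
    exact List.mem_singleton.2 rfl
  | a :: as, b :: bs, w, h => by
    simp only [shuffles, List.mem_append, List.mem_map] at h
    rcases h with ⟨t, ht, rfl⟩ | ⟨t, ht, rfl⟩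
    · simp only [List.reverse_cons]
      simpa only [List.reverse_cons] using
        snoc_left_mem_shuffles _ _ _ a (reverse_mem_shuffles as (b :: bs) t ht)
    · simp only [List.reverse_cons]
      simpa only [List.reverse_cons] using
        snoc_right_mem_shuffles _ _ _ b (reverse_mem_shuffles (a :: as) bs t ht)
  termination_by p v => p.length + v.length

theorem mem_shuffles_cons_elim {α : Type*} {p v : List α} {x : α} {w : List α}
    (h : x :: w ∈ shuffles p v) :
    (∃ p', p = x :: p' ∧ w ∈ shuffles p' v) ∨ (∃ v', v = x :: v' ∧ w ∈ shuffles p v') := by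
  match p, v with
  | [], v =>
    rw [shuffles_nil_left, List.mem_singleton] at h
    exact Or.inr ⟨w, h.symm, by rw [shuffles_nil_left]; exact List.mem_singleton.2 rfl⟩
  | a :: as, [] =>
    rw [shuffles_nil_right, List.mem_singleton] at h
    obtain ⟨rfl, rfl⟩ := List.cons_eq_cons.mp h.symm
    exact Or.inl ⟨as, rfl, by rw [shuffles_nil_right]; exact List.mem_singleton.2 rfl⟩
  | a :: as, b :: bs =>
    simp only [shuffles, List.mem_append, List.mem_map] at h
    rcases h with ⟨t, ht, he⟩ | ⟨t, ht, he⟩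
    · obtain ⟨rfl, rfl⟩ := List.cons_eq_cons.mp he
      exact Or.inl ⟨as, rfl, ht⟩
    · obtain ⟨rfl, rfl⟩ := List.cons_eq_cons.mp he
      exact Or.inr ⟨bs, rfl, ht⟩

theorem mem_shuffles_snoc_iff {α : Type*} {p v w : List α} {x : α} :
    w ++ [x] ∈ shuffles p v ↔
      (∃ p', p = p' ++ [x] ∧ w ∈ shuffles p' v) ∨ (∃ v', v = v' ++ [x] ∧ w ∈ shuffles p v') := by
  constructor
  · intro h
    have h' := reverse_mem_shuffles _ _ _ h
    rw [List.reverse_append, List.reverse_singleton, List.singleton_append] at h'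
    rcases mem_shuffles_cons_elim h' with ⟨p', hp, hw⟩ | ⟨v', hv, hw⟩
    · refine Or.inl ⟨p'.reverse, ?_, ?_⟩
      · rw [← List.reverse_reverse p, hp, List.reverse_cons]
      · simpa using reverse_mem_shuffles _ _ _ hw
    · refine Or.inr ⟨v'.reverse, ?_, ?_⟩
      · rw [← List.reverse_reverse v, hv, List.reverse_cons]
      · simpa using reverse_mem_shuffles _ _ _ hw
  · rintro (⟨p', rfl, h⟩ | ⟨v', rfl, h⟩)
    · exact snoc_left_mem_shuffles _ _ _ _ h
    · exact snoc_right_mem_shuffles _ _ _ _ h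

/-! ### Auxiliary lemmas on the word algebra -/

theorem mul_word_concat_apply {m : ℕ} (f : Wd m) (l : List (Fin m)) (i : Fin m) :
    (f * word [i]).coeff (FreeMonoid.ofList (l ++ [i])) = f.coeff (FreeMonoid.ofList l) := by
  unfold word
  have H : ∀ g : FreeMonoid (Fin m),
      g * FreeMonoid.ofList [i] = FreeMonoid.ofList (l ++ [i]) ↔ g = FreeMonoid.ofList l := by
    intro g
    rw [FreeMonoid.ofList_append]
    exact mul_left_inj _
  rw [MonoidAlgebra.mul_single_apply_aux (x := f) _ (fun g _ => H g), mul_one]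

theorem mul_word_apply_eq_zero {m : ℕ} (f : Wd m) {l : List (Fin m)} {i : Fin m}
    (h : ∀ t, l ≠ t ++ [i]) : (f * word [i]).coeff (FreeMonoid.ofList l) = 0 := by
  unfold word
  apply MonoidAlgebra.mul_single_apply_of_not_exists_mul
  rintro ⟨d, hd⟩
  exact h (FreeMonoid.toList d) (congrArg FreeMonoid.toList hd)

theorem word_mul_cons_apply {m : ℕ} (f : Wd m) (l : List (Fin m)) (i : Fin m) :
    (word [i] * f).coeff (FreeMonoid.ofList (i :: l)) = f.coeff (FreeMonoid.ofList l) := by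
  unfold word
  have H : ∀ g : FreeMonoid (Fin m),
      FreeMonoid.ofList [i] * g = FreeMonoid.ofList (i :: l) ↔ g = FreeMonoid.ofList l := by
    intro g
    rw [show (i :: l) = [i] ++ l from rfl, FreeMonoid.ofList_append]
    exact mul_right_inj _
  rw [MonoidAlgebra.single_mul_apply_aux (x := f) _ (fun g _ => H g), one_mul]

theorem word_mul_apply_eq_zero {m : ℕ} (f : Wd m) {l : List (Fin m)} {i : Fin m}
    (h : ∀ t, l ≠ i :: t) : (word [i] * f).coeff (FreeMonoid.ofList l) = 0 := by
  unfold word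
  apply MonoidAlgebra.single_mul_apply_of_not_exists_mul
  rintro ⟨d, hd⟩
  exact h (FreeMonoid.toList d) (congrArg FreeMonoid.toList hd)

theorem word_apply {m : ℕ} (l l' : List (Fin m)) :
    (word l).coeff (FreeMonoid.ofList l') = if l = l' then (1:ℚ) else 0 := by
  classical
  unfold word
  rw [MonoidAlgebra.single_apply]
  by_cases h : l = l'
  · subst h
    rw [if_pos rfl, if_pos rfl]
  · rw [if_neg h, if_neg (fun he => h (FreeMonoid.ofList.injective he))]

/-! ### The key induction -/

theorem key {m : ℕ} [NeZero m] (a : List (Fin m)) :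
    (0 : Fin m) ∉ a → a.Nodup →
    ∀ u v : List (Fin m), (0 : Fin m) ∉ u → (0 : Fin m) ∉ v →
    (comb a).expand.coeff (FreeMonoid.ofList (u ++ (0 : Fin m) :: v)) =
      if a ∈ shuffles u.reverse v then (-1 : ℚ) ^ u.length else 0 := by
  induction a using List.reverseRecOn with
  | nil =>
    intro _ _ u v hu hv
    have hexp : (comb ([] : List (Fin m))).expand = word [0] := rfl
    rw [hexp, word_apply]
    match u, v with
    | [], [] => simp [shuffles]
    | [], y :: v' =>
      have h1 : ¬([(0:Fin m)] = [] ++ (0:Fin m) :: y :: v') := by simp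
      have h2 : ([] : List (Fin m)) ∉ shuffles ([] : List (Fin m)).reverse (y :: v') := by
        intro hm
        have := (perm_of_mem_shuffles _ _ _ hm).length_eq
        simp at this
      rw [if_neg h1, if_neg h2]
    | x :: u', v =>
      have h1 : ¬([(0:Fin m)] = (x :: u') ++ (0:Fin m) :: v) := by simp
      have h2 : ([] : List (Fin m)) ∉ shuffles (x :: u').reverse v := by
        intro hm
        have := (perm_of_mem_shuffles _ _ _ hm).length_eq
        simp at this
      rw [if_neg h1, if_neg h2]
  | append_singleton a i IH =>
    intro ha0 hnd u v hu hv
    have hi0 : i ≠ 0 := fun h => ha0 (by simp [h])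
    have ha0' : (0 : Fin m) ∉ a := fun h => ha0 (by simp [h])
    obtain ⟨hnd', -, hdisj⟩ := List.nodup_append'.mp hnd
    have hia : i ∉ a := fun h => hdisj h (List.mem_singleton.2 rfl)
    have hnotmem : ∀ p q : List (Fin m), i ∈ p ++ q → a ∉ shuffles p q := fun p q hip hm =>
      hia ((perm_of_mem_shuffles _ _ _ hm).mem_iff.2 hip)
    have hIH := IH ha0' hnd'
    have hcomb : (comb (a ++ [i])).expand
        = (comb a).expand * word [i] - word [i] * (comb a).expand := by
      have hc : comb (a ++ [i]) = LieTree.node (comb a) (LieTree.leaf i) := by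
        simp [comb]
      rw [hc]
      rfl
    rw [hcomb, MonoidAlgebra.coeff_sub, Finsupp.sub_apply]
    rcases v.eq_nil_or_concat' with rfl | ⟨v', y, rfl⟩
    · -- v = []
      have hT1 : ((comb a).expand * word [i]).coeff (FreeMonoid.ofList (u ++ (0:Fin m) :: [])) = 0 := by
        apply mul_word_apply_eq_zero
        intro t ht
        obtain ⟨-, h2⟩ := List.append_inj' ht rfl
        injection h2 with h2'
        exact hi0 h2'.symm
      rw [hT1]
      cases u with
      | nil =>
        have hT2 : (word [i] * (comb a).expand).coeff
            (FreeMonoid.ofList (([] : List (Fin m)) ++ (0:Fin m) :: [])) = 0 := by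
          apply word_mul_apply_eq_zero
          intro t ht
          rw [List.nil_append] at ht
          injection ht with h1 _
          exact hi0 h1.symm
        rw [hT2]
        have hcond : a ++ [i] ∉ shuffles ([] : List (Fin m)).reverse [] := by
          rw [List.reverse_nil, shuffles_nil_right, List.mem_singleton]
          simp
        rw [if_neg hcond]
        norm_num
      | cons x u' =>
        by_cases hx : x = i
        · subst hx
          have hu' : (0:Fin m) ∉ u' := fun h => hu (List.mem_cons_of_mem _ h)
          have hT2 : (word [x] * (comb a).expand).coeff
              (FreeMonoid.ofList ((x :: u') ++ (0:Fin m) :: []))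
              = (comb a).expand.coeff (FreeMonoid.ofList (u' ++ (0:Fin m) :: [])) := by
            rw [List.cons_append]
            exact word_mul_cons_apply _ _ _
          rw [hT2, hIH u' [] hu' hv]
          by_cases hc : a = u'.reverse
          · rw [if_pos (by rw [shuffles_nil_right, List.mem_singleton]; exact hc),
              if_pos (by rw [List.reverse_cons, shuffles_nil_right, List.mem_singleton, hc])]
            simp only [List.length_cons, pow_succ]
            ring
          · rw [if_neg (by rw [shuffles_nil_right, List.mem_singleton]; exact hc),
              if_neg (by
                rw [List.reverse_cons, shuffles_nil_right, List.mem_singleton]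
                intro he
                exact hc (List.append_inj' he rfl).1)]
            norm_num
        · have hT2 : (word [i] * (comb a).expand).coeff
              (FreeMonoid.ofList ((x :: u') ++ (0:Fin m) :: [])) = 0 := by
            apply word_mul_apply_eq_zero
            intro t ht
            rw [List.cons_append] at ht
            injection ht with h1 _
            exact hx h1
          rw [hT2]
          have hcond : a ++ [i] ∉ shuffles (x :: u').reverse [] := by
            rw [shuffles_nil_right, List.mem_singleton, List.reverse_cons]
            intro he
            obtain ⟨-, h2⟩ := List.append_inj' he rfl
            injection h2 with h2'
            exact hx h2'.symm
          rw [if_neg hcond]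
          norm_num
    · -- v = v' ++ [y]
      have hv' : (0:Fin m) ∉ v' := fun h => hv (List.mem_append_left _ h)
      have harg : u ++ (0:Fin m) :: (v' ++ [y]) = (u ++ (0:Fin m) :: v') ++ [y] := by simp
      rw [harg]
      by_cases hy : y = i
      · subst hy
        have hT1 : ((comb a).expand * word [y]).coeff
            (FreeMonoid.ofList ((u ++ (0:Fin m) :: v') ++ [y]))
            = (comb a).expand.coeff (FreeMonoid.ofList (u ++ (0:Fin m) :: v')) :=
          mul_word_concat_apply _ _ _
        rw [hT1, hIH u v' hu hv']
        cases u with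
        | nil =>
          have hT2 : (word [y] * (comb a).expand).coeff
              (FreeMonoid.ofList ((([] : List (Fin m)) ++ (0:Fin m) :: v') ++ [y])) = 0 := by
            apply word_mul_apply_eq_zero
            intro t ht
            rw [List.nil_append, List.cons_append] at ht
            injection ht with h1 _
            exact hi0 h1.symm
          rw [hT2]
          have hiff : (a ++ [y] ∈ shuffles ([] : List (Fin m)).reverse (v' ++ [y]))
              ↔ a ∈ shuffles ([] : List (Fin m)).reverse v' := by
            rw [mem_shuffles_snoc_iff]
            constructor
            · rintro (⟨p', hp, -⟩ | ⟨w', hw, hm⟩)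
              · exact absurd hp (by simp)
              · obtain ⟨rfl, -⟩ := List.append_inj' hw rfl
                exact hm
            · intro hm
              exact Or.inr ⟨v', rfl, hm⟩
          by_cases hc : a ∈ shuffles ([] : List (Fin m)).reverse v'
          · rw [if_pos hc, if_pos (hiff.2 hc)]
            norm_num
          · rw [if_neg hc, if_neg (fun h => hc (hiff.1 h))]
            norm_num
        | cons x u' =>
          by_cases hx : x = y
          · subst hx
            -- here the letter x (= i = y) occurs on both sides; everything vanishes
            have hu' : (0:Fin m) ∉ u' := fun h => hu (List.mem_cons_of_mem _ h)
            have hT2 : (word [x] * (comb a).expand).coeff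
                (FreeMonoid.ofList (((x :: u') ++ (0:Fin m) :: v') ++ [x]))
                = (comb a).expand.coeff (FreeMonoid.ofList ((u' ++ (0:Fin m) :: v') ++ [x])) := by
              rw [List.cons_append, List.cons_append]
              exact word_mul_cons_apply _ _ _
            have harg2 : (u' ++ (0:Fin m) :: v') ++ [x] = u' ++ (0:Fin m) :: (v' ++ [x]) := by
              simp
            rw [hT2, harg2, hIH u' (v' ++ [x]) hu' hv]
            rw [if_neg (hnotmem _ _ (by simp)), if_neg (hnotmem _ _ (by simp))]
            have hcond : a ++ [x] ∉ shuffles (x :: u').reverse (v' ++ [x]) := by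
              intro hm
              have hnd2 := (perm_of_mem_shuffles _ _ _ hm).nodup hnd
              exact (List.disjoint_of_nodup_append hnd2)
                (show x ∈ (x :: u').reverse by simp) (show x ∈ v' ++ [x] by simp)
            rw [if_neg hcond]
            norm_num
          · have hT2 : (word [y] * (comb a).expand).coeff
                (FreeMonoid.ofList (((x :: u') ++ (0:Fin m) :: v') ++ [y])) = 0 := by
              apply word_mul_apply_eq_zero
              intro t ht
              rw [List.cons_append, List.cons_append] at ht
              injection ht with h1 _
              exact hx h1
            rw [hT2]
            have hiff : (a ++ [y] ∈ shuffles (x :: u').reverse (v' ++ [y]))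
                ↔ a ∈ shuffles (x :: u').reverse v' := by
              rw [mem_shuffles_snoc_iff]
              constructor
              · rintro (⟨p', hp, -⟩ | ⟨w', hw, hm⟩)
                · rw [List.reverse_cons] at hp
                  obtain ⟨-, h2⟩ := List.append_inj' hp rfl
                  injection h2 with h2'
                  exact absurd h2' hx
                · obtain ⟨rfl, -⟩ := List.append_inj' hw rfl
                  exact hm
              · intro hm
                exact Or.inr ⟨v', rfl, hm⟩
            by_cases hc : a ∈ shuffles (x :: u').reverse v'
            · rw [if_pos hc, if_pos (hiff.2 hc), sub_zero]
            · rw [if_neg hc, if_neg (fun h => hc (hiff.1 h))]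
              norm_num
      · -- y ≠ i
        have hT1 : ((comb a).expand * word [i]).coeff
            (FreeMonoid.ofList ((u ++ (0:Fin m) :: v') ++ [y])) = 0 := by
          apply mul_word_apply_eq_zero
          intro t ht
          obtain ⟨-, h2⟩ := List.append_inj' ht rfl
          injection h2 with h2'
          exact hy h2'
        rw [hT1]
        cases u with
        | nil =>
          have hT2 : (word [i] * (comb a).expand).coeff
              (FreeMonoid.ofList ((([] : List (Fin m)) ++ (0:Fin m) :: v') ++ [y])) = 0 := by
            apply word_mul_apply_eq_zero
            intro t ht
            rw [List.nil_append, List.cons_append] at ht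
            injection ht with h1 _
            exact hi0 h1.symm
          rw [hT2]
          have hcond : a ++ [i] ∉ shuffles ([] : List (Fin m)).reverse (v' ++ [y]) := by
            rw [mem_shuffles_snoc_iff]
            rintro (⟨p', hp, -⟩ | ⟨w', hw, -⟩)
            · exact absurd hp (by simp)
            · obtain ⟨-, h2⟩ := List.append_inj' hw rfl
              injection h2 with h2'
              exact hy h2'
          rw [if_neg hcond]
          norm_num
        | cons x u' =>
          by_cases hx : x = i
          · subst hx
            have hu' : (0:Fin m) ∉ u' := fun h => hu (List.mem_cons_of_mem _ h)
            have hT2 : (word [x] * (comb a).expand).coeff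
                (FreeMonoid.ofList (((x :: u') ++ (0:Fin m) :: v') ++ [y]))
                = (comb a).expand.coeff (FreeMonoid.ofList ((u' ++ (0:Fin m) :: v') ++ [y])) := by
              rw [List.cons_append, List.cons_append]
              exact word_mul_cons_apply _ _ _
            have harg2 : (u' ++ (0:Fin m) :: v') ++ [y] = u' ++ (0:Fin m) :: (v' ++ [y]) := by
              simp
            rw [hT2, harg2, hIH u' (v' ++ [y]) hu' hv]
            have hiff : (a ++ [x] ∈ shuffles (x :: u').reverse (v' ++ [y]))
                ↔ a ∈ shuffles u'.reverse (v' ++ [y]) := by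
              rw [mem_shuffles_snoc_iff]
              constructor
              · rintro (⟨p', hp, hm⟩ | ⟨w', hw, -⟩)
                · rw [List.reverse_cons] at hp
                  obtain ⟨h1, -⟩ := List.append_inj' hp rfl
                  rw [← h1] at hm
                  exact hm
                · obtain ⟨-, h2⟩ := List.append_inj' hw rfl
                  injection h2 with h2'
                  exact absurd h2' hy
              · intro hm
                exact Or.inl ⟨u'.reverse, by rw [List.reverse_cons], hm⟩
            by_cases hc : a ∈ shuffles u'.reverse (v' ++ [y])
            · rw [if_pos hc, if_pos (hiff.2 hc)]
              simp only [List.length_cons, pow_succ]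
              ring
            · rw [if_neg hc, if_neg (fun h => hc (hiff.1 h))]
              norm_num
          · have hT2 : (word [i] * (comb a).expand).coeff
                (FreeMonoid.ofList (((x :: u') ++ (0:Fin m) :: v') ++ [y])) = 0 := by
              apply word_mul_apply_eq_zero
              intro t ht
              rw [List.cons_append, List.cons_append] at ht
              injection ht with h1 _
              exact hx h1
            rw [hT2]
            have hcond : a ++ [i] ∉ shuffles (x :: u').reverse (v' ++ [y]) := by
              rw [mem_shuffles_snoc_iff]
              rintro (⟨p', hp, -⟩ | ⟨w', hw, -⟩)
              · rw [List.reverse_cons] at hp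
                obtain ⟨-, h2⟩ := List.append_inj' hp rfl
                injection h2 with h2'
                exact hx h2'
              · obtain ⟨-, h2⟩ := List.append_inj' hw rfl
                injection h2 with h2'
                exact hy h2'
            rw [if_neg hcond]
            norm_num


/-- the comb `Γ_{1a}` expands as `Σ_{a ∈ ū⧢v} (-1)^{|u|} u1v`; equivalently,
for words `u`, `v` not containing the letter `x_1 = 0`, the coefficient of the word `u1v`
in `Γ_{1a}` is `(-1)^{|u|}` if `a` is a shuffle of the reversal `ū` with `v`, and `0`
otherwise. -/
theorem stmt3 (n : ℕ) [NeZero (n - 1)] (a : List (Fin (n - 1)))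
    (ha : ((0 : Fin (n - 1)) :: a).Perm (List.finRange (n - 1)))
    (u v : List (Fin (n - 1))) (hu : (0 : Fin (n - 1)) ∉ u) (hv : (0 : Fin (n - 1)) ∉ v) :
    (comb a).expand.coeff (FreeMonoid.ofList (u ++ (0 : Fin (n - 1)) :: v)) =
      if a ∈ shuffles u.reverse v then (-1 : ℚ) ^ u.length else 0 := by
  have hnd : ((0 : Fin (n - 1)) :: a).Nodup :=
    ha.nodup_iff.mpr (List.nodup_finRange _)
  obtain ⟨h0, hnd'⟩ := List.nodup_cons.mp hnd
  exact key a h0 hnd' u v hu hv
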